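/- Assume the cost c(x,y) = h(x−y) satisfies (H1)–(H3). Consider the setup: distinct points u_1,…,u_n ∈ ℝ^d, distinct points x_1,…,x_n ∈ ℝ^d, an optimal assignment σ_n for (u,x) with T(u_i) = x_{σ_n(i)}; fix j ∈ {1,…,n} and v ∈ S^{d−1}, relabel u_1,…,u_n as u_(1),…,u_(n) so that for some ℓ, u_(ℓ) = u_j and {u_(1),…,u_(ℓ)} consists exactly of the sample points in the halfspace {x : ⟨v, x − u_j⟩ ≤ 0}; fix z_0 ∈ ℝ^d, m ∈ {1,…,n}, and for k ∈ ℕ set z_k = u_j − ∇h*(z_0 + k v); let T_k be an optimal assignment of the n source points u_(1),…,u_(n) to the n target points consisting of z_k with multiplicity m together with T(u_(i)) for i = m+1,…,n. If m ≥ ℓ, then ‖T_k(u_j)‖ → ∞ as k → ∞, for any choice of the optimal assignments T_k. -/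

import Mathlib

open Filter MeasureTheory Bornology Topology Set
open scoped RealInnerProductSpace ENNReal BigOperators Classical

noncomputable section

abbrev Euc (d : ℕ) := EuclideanSpace ℝ (Fin d)

/-- The cost function `c(x,y) = h(x-y)`. -/
def cost {d : ℕ} (h : Euc d → ℝ) (x y : Euc d) : ℝ := h (x - y)

/-- The truncated cone `Cone(r, θ, z, p)`. -/
def TruncCone {d : ℕ} (r θ : ℝ) (z p : Euc d) : Set (Euc d) :=
  {x | ‖x - p‖ * ‖z‖ * Real.cos (θ / 2) ≤ ⟪z, x - p⟫ ∧ ⟪z, x - p⟫ ≤ r * ‖z‖}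

/-- (H1): `h` is strictly convex. -/
def H1 {d : ℕ} (h : Euc d → ℝ) : Prop := StrictConvexOn ℝ Set.univ h

/-- (H2): for every height `r > 0` and angle `θ ∈ (0, π)` there is `M > 0` such that for every
`p` with `‖p‖ > M` there is a truncated cone with vertex `p` on which `h` attains its maximum
at `p`. -/
def H2 {d : ℕ} (h : Euc d → ℝ) : Prop :=
  ∀ r : ℝ, 0 < r → ∀ θ : ℝ, θ ∈ Set.Ioo 0 Real.pi → ∃ M : ℝ, 0 < M ∧
    ∀ p : Euc d, M < ‖p‖ → ∃ z : Euc d, z ≠ 0 ∧ ∀ x ∈ TruncCone r θ z p, h x ≤ h p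

/-- (H3): `h(x)/‖x‖ → ∞` as `‖x‖ → ∞`. -/
def H3 {d : ℕ} (h : Euc d → ℝ) : Prop :=
  ∀ C : ℝ, ∃ R : ℝ, ∀ x : Euc d, R ≤ ‖x‖ → C * ‖x‖ ≤ h x

/-- A function `f : ℝ^d → ℝ ∪ {-∞}` is `c`-concave if it is an infimum of functions
`x ↦ c(x,y) - t` over a nonempty family `𝒯` of pairs `(y,t)`. -/
def IsCConcave {d : ℕ} (h : Euc d → ℝ) (f : Euc d → EReal) : Prop :=
  ∃ T : Set (Euc d × ℝ), T.Nonempty ∧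
    ∀ x : Euc d, f x = ⨅ p ∈ T, ((cost h x p.1 - p.2 : ℝ) : EReal)

/-- The `c`-superdifferential of `f`, as a subset of `ℝ^d × ℝ^d`. -/
def CSuperdiff {d : ℕ} (h : Euc d → ℝ) (f : Euc d → EReal) : Set (Euc d × Euc d) :=
  {q | ∀ z : Euc d, f z ≤ f q.1 + ((cost h z q.2 - cost h q.1 q.2 : ℝ) : EReal)}

/-- `∂^c f(x)`. -/
def CSuperdiffAt {d : ℕ} (h : Euc d → ℝ) (f : Euc d → EReal) (x : Euc d) : Set (Euc d) :=
  {y | (x, y) ∈ CSuperdiff h f}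

/-- `∂^c f(U) = ⋃_{x ∈ U} ∂^c f(x)`. -/
def CSuperdiffImg {d : ℕ} (h : Euc d → ℝ) (f : Euc d → EReal) (U : Set (Euc d)) :
    Set (Euc d) :=
  ⋃ x ∈ U, CSuperdiffAt h f x

/-- `dom(f) = {x : f(x) > -∞}`. -/
def edom {d : ℕ} (f : Euc d → EReal) : Set (Euc d) := {x | f x ≠ ⊥}

/-- A sequence of sets escapes to the horizon if it eventually avoids every ball
`B_R(0)`. -/
def EscapesToHorizon {α : Type*} [Norm α] (A : ℕ → Set α) : Prop :=
  ∀ R : ℝ, 0 < R → ∃ N : ℕ, ∀ n, N ≤ n → ∀ a ∈ A n, R ≤ ‖a‖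

/-- No subsequence of the sequence of sets escapes to the horizon. -/
def NoSubseqEscapes {α : Type*} [Norm α] (A : ℕ → Set α) : Prop :=
  ∀ φ : ℕ → ℕ, StrictMono φ → ¬ EscapesToHorizon fun k => A (φ k)

/-- A Kantorovich potential for `(Q, P')`: a `c`-concave function `f` whose `c`-superdifferential
is `Q`-a.e. a singleton `{T x}` and whose (a.e. defined) selection `T` pushes `Q` forward
to `P'`. -/
def IsKantorovichPotential {d : ℕ} (h : Euc d → ℝ) (Q P' : Measure (Euc d))
    (f : Euc d → EReal) : Prop :=
  IsCConcave h f ∧ ∃ T : Euc d → Euc d,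
    (∀ᵐ x ∂Q, CSuperdiffAt h f x = {T x}) ∧ Measure.map T Q = P'

/-- The Tukey depth `TD(u;Q) = inf_{v ∈ S^{d-1}} Q {x : ⟨v, x-u⟩ ≤ 0}`. -/
def tukeyDepth {d : ℕ} (Q : Measure (Euc d)) (u : Euc d) : ℝ≥0∞ :=
  ⨅ v ∈ {v : Euc d | ‖v‖ = 1}, Q {x | ⟪v, x - u⟫ ≤ 0}

/-- The set `S_ε(u)` of possible values at `u` of `c`-superdifferentials of Kantorovich
potentials from `Q` to an `ε`-contamination of `P`. -/
def contamSet {d : ℕ} (h : Euc d → ℝ) (Q P : Measure (Euc d)) (ε : ℝ) (u : Euc d) :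
    Set (Euc d) :=
  {y | ∃ μ : Measure (Euc d), IsProbabilityMeasure μ ∧ ∃ f : Euc d → EReal,
    IsKantorovichPotential h Q (ENNReal.ofReal (1 - ε) • P + ENNReal.ofReal ε • μ) f ∧
    y ∈ CSuperdiffAt h f u}

/-- Breakdown point `BP(u) = inf {ε ∈ (0,1) : S_ε(u) is unbounded}`. -/
def breakdownPoint {d : ℕ} (h : Euc d → ℝ) (Q P : Measure (Euc d)) (u : Euc d) : ℝ≥0∞ :=
  ⨅ ε ∈ {ε : ℝ | 0 < ε ∧ ε < 1 ∧ ¬ IsBounded (contamSet h Q P ε u)}, ENNReal.ofReal ε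

/-- `σ` is an optimal assignment for source points `u` and target points `x`. -/
def IsOptAssign {d n : ℕ} (h : Euc d → ℝ) (u x : Fin n → Euc d)
    (σ : Equiv.Perm (Fin n)) : Prop :=
  ∀ τ : Equiv.Perm (Fin n), ∑ i, cost h (u i) (x (σ i)) ≤ ∑ i, cost h (u i) (x (τ i))

/-- The dataset `x'` shares at least `k` atoms (with multiplicity) with the dataset `x`
of distinct points. -/
def SharesAtoms {d n : ℕ} (x x' : Fin n → Euc d) (k : ℕ) : Prop :=
  ∃ s : Finset (Fin n), k ≤ s.card ∧ ∃ g : Fin n → Fin n,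
    Set.InjOn g ↑s ∧ ∀ i ∈ s, x' (g i) = x i

/-- The set of values `x'_{σ(j)}` over datasets `x'` sharing at least `n - ℓ` atoms with `x`
and optimal assignments `σ` for `(u, x')`. -/
def fsBadSet {d n : ℕ} (h : Euc d → ℝ) (u x : Fin n → Euc d) (j : Fin n) (ℓ : ℕ) :
    Set (Euc d) :=
  {y | ∃ (x' : Fin n → Euc d) (σ : Equiv.Perm (Fin n)),
    SharesAtoms x x' (n - ℓ) ∧ IsOptAssign h u x' σ ∧ y = x' (σ j)}

/-- Finite sample (replacement) breakdown point of `T_{Q_n → P_n}(u_j)`. -/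
def finiteSampleBP {d n : ℕ} (h : Euc d → ℝ) (u x : Fin n → Euc d) (j : Fin n) : ℝ :=
  ((sInf {ℓ : ℕ | 1 ≤ ℓ ∧ ℓ ≤ n ∧ ¬ IsBounded (fsBadSet h u x j ℓ)} : ℕ) : ℝ) / n

/-- Tukey depth of `a` with respect to the empirical measure of `u_1, …, u_n`. -/
def empTD {d n : ℕ} (u : Fin n → Euc d) (a : Euc d) : ℝ :=
  ⨅ v : {v : Euc d // ‖v‖ = 1},
    ((Finset.univ.filter fun i => ⟪(v : Euc d), u i - a⟫ ≤ 0).card : ℝ) / n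

/-- Lower Tukey depth of `a` with respect to the empirical measure of `u_1, …, u_n`. -/
def empTDlt {d n : ℕ} (u : Fin n → Euc d) (a : Euc d) : ℝ :=
  ⨅ v : {v : Euc d // ‖v‖ = 1},
    ((Finset.univ.filter fun i => ⟪(v : Euc d), u i - a⟫ < 0).card : ℝ) / n

/-- Points in general position: every subset of cardinality at most `d+1` is affinely
independent. -/
def InGeneralPosition {d n : ℕ} (u : Fin n → Euc d) : Prop :=
  ∀ s : Finset (Fin n), s.card ≤ d + 1 → AffineIndependent ℝ fun i : s => u (i : Fin n)

/-- Convex conjugate `h*(y) = sup_x (⟨x,y⟩ - h(x))`. -/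
def convConj {d : ℕ} (h : Euc d → ℝ) (y : Euc d) : ℝ := ⨆ x : Euc d, (⟪x, y⟫ - h x)

/-- Topological support of a measure. -/
def measSupport {d : ℕ} (Q : Measure (Euc d)) : Set (Euc d) :=
  {x | ∀ U : Set (Euc d), IsOpen U → x ∈ U → 0 < Q U}

/-- A set `Γ ⊂ ℝ^d × ℝ^d` is `c`-cyclically monotone. -/
def CCyclMono {d : ℕ} (h : Euc d → ℝ) (Γ : Set (Euc d × Euc d)) : Prop :=
  ∀ (N : ℕ) (p : Fin N → Euc d × Euc d), (∀ i, p i ∈ Γ) →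
    ∀ τ : Equiv.Perm (Fin N),
      ∑ i, cost h (p i).1 (p i).2 ≤ ∑ i, cost h (p i).1 (p (τ i)).2


set_option maxHeartbeats 1000000 in
lemma aux_cont {d : ℕ} {h : Euc d → ℝ} (h1 : StrictConvexOn ℝ Set.univ h) : Continuous h := by
  have := (h1.convexOn).continuousOn isOpen_univ
  rw [continuousOn_univ] at this; exact this

set_option maxHeartbeats 1000000 in
lemma aux_exists_max {d : ℕ} {h : Euc d → ℝ} (hc : Continuous h) (h3 : H3 h)
    (p : Euc d) : ∃ x : Euc d, ∀ w, ⟪w, p⟫ - h w ≤ ⟪x, p⟫ - h x := by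
  obtain ⟨R, hR⟩ := h3 (‖p‖ + 1)
  set R' : ℝ := max (max R (h 0)) 0 with hR'
  have h0mem : (0 : Euc d) ∈ Metric.closedBall (0 : Euc d) R' := by
    simp [hR', le_max_right]
  have hcg : Continuous fun w : Euc d => ⟪w, p⟫ - h w :=
    (continuous_id.inner continuous_const).sub hc
  obtain ⟨x, hxmem, hxmax⟩ := (isCompact_closedBall (0 : Euc d) R').exists_isMaxOn
    ⟨0, h0mem⟩ hcg.continuousOn
  refine ⟨x, fun w => ?_⟩
  by_cases hw : w ∈ Metric.closedBall (0 : Euc d) R'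
  · exact hxmax hw
  · have hwn : R' < ‖w‖ := by simpa [Metric.mem_closedBall, dist_zero_right] using hw
    have hub : ⟪w, p⟫ ≤ ‖w‖ * ‖p‖ := real_inner_le_norm w p
    have hhw : (‖p‖ + 1) * ‖w‖ ≤ h w :=
      hR w (le_of_lt (lt_of_le_of_lt (le_trans (le_max_left R (h 0)) (le_max_left _ 0)) hwn))
    have h0le : h 0 ≤ R' := le_trans (le_max_right R (h 0)) (le_max_left _ 0)
    have h0max : ⟪(0 : Euc d), p⟫ - h 0 ≤ ⟪x, p⟫ - h x := hxmax h0mem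
    have : ⟪(0 : Euc d), p⟫ = 0 := inner_zero_left p
    nlinarith [norm_nonneg w]

set_option maxHeartbeats 1000000 in
lemma aux_max_unique {d : ℕ} {h : Euc d → ℝ} (h1 : StrictConvexOn ℝ Set.univ h)
    (p x₁ x₂ : Euc d) (hm1 : ∀ w, ⟪w, p⟫ - h w ≤ ⟪x₁, p⟫ - h x₁)
    (hm2 : ∀ w, ⟪w, p⟫ - h w ≤ ⟪x₂, p⟫ - h x₂) : x₁ = x₂ := by
  by_contra hne
  have hmid := h1.2 (Set.mem_univ x₁) (Set.mem_univ x₂) hne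
    (by norm_num : (0:ℝ) < 1/2) (by norm_num : (0:ℝ) < 1/2) (by norm_num)
  have e1 : ⟪x₁, p⟫ - h x₁ = ⟪x₂, p⟫ - h x₂ := le_antisymm (hm2 x₁) (hm1 x₂)
  have e2 := hm1 ((1/2 : ℝ) • x₁ + (1/2 : ℝ) • x₂)
  have e3 : ⟪(1/2 : ℝ) • x₁ + (1/2 : ℝ) • x₂, p⟫ = (1/2) * ⟪x₁, p⟫ + (1/2) * ⟪x₂, p⟫ := by
    rw [inner_add_left, real_inner_smul_left, real_inner_smul_left]
  rw [e3] at e2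
  have : (1/2 : ℝ) * h x₁ + (1/2 : ℝ) * h x₂ ≤ h ((1/2 : ℝ) • x₁ + (1/2 : ℝ) • x₂) := by
    linarith
  simp only [smul_eq_mul] at hmid; linarith

set_option maxHeartbeats 1000000 in
lemma aux_max_bound {d : ℕ} {h : Euc d → ℝ} (h3 : H3 h) (b : ℝ) :
    ∃ R : ℝ, ∀ (p x' : Euc d), ‖p‖ ≤ b → (∀ w, ⟪w, p⟫ - h w ≤ ⟪x', p⟫ - h x') → ‖x'‖ ≤ R := by
  obtain ⟨R₀, hR₀⟩ := h3 (b + 1)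
  refine ⟨max R₀ (h 0), fun p x' hp hmax => ?_⟩
  by_contra hcon
  push_neg at hcon
  have hx'R : R₀ ≤ ‖x'‖ := le_of_lt (lt_of_le_of_lt (le_max_left _ _) hcon)
  have hhx' : (b + 1) * ‖x'‖ ≤ h x' := hR₀ x' hx'R
  have h0 := hmax 0
  have hz : ⟪(0 : Euc d), p⟫ = 0 := inner_zero_left p
  have hub : ⟪x', p⟫ ≤ ‖x'‖ * ‖p‖ := real_inner_le_norm x' p
  have h0lt : h 0 < ‖x'‖ := lt_of_le_of_lt (le_max_right R₀ (h 0)) hcon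
  nlinarith [norm_nonneg x']

set_option maxHeartbeats 1000000 in
lemma aux_phi_cont {d : ℕ} {h : Euc d → ℝ} (h1 : StrictConvexOn ℝ Set.univ h)
    (h3 : H3 h) (Φ : Euc d → Euc d)
    (hΦ : ∀ p w, ⟪w, p⟫ - h w ≤ ⟪Φ p, p⟫ - h (Φ p)) (p : Euc d) :
    Tendsto Φ (𝓝 p) (𝓝 (Φ p)) := by
  have hc : Continuous h := aux_cont h1
  rw [Filter.tendsto_iff_seq_tendsto]
  intro q hq
  by_contra hnot
  rw [Metric.tendsto_atTop] at hnot
  push_neg at hnot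
  obtain ⟨ε, hε, hfreq⟩ := hnot
  obtain ⟨R, hRb⟩ := aux_max_bound h3 (‖p‖ + 1)
  have hev : ∀ᶠ n in atTop, ‖q n‖ ≤ ‖p‖ + 1 := by
    have : ∀ᶠ n in atTop, q n ∈ Metric.closedBall p 1 :=
      hq.eventually (Metric.closedBall_mem_nhds p one_pos)
    filter_upwards [this] with n hn
    have : ‖q n - p‖ ≤ 1 := by simpa [Metric.mem_closedBall, dist_eq_norm] using hn
    have := norm_le_norm_add_norm_sub' (q n) p
    linarith [norm_sub_rev (q n) p ▸ this]
  have hfr : ∃ᶠ n in atTop, ε ≤ dist (Φ (q n)) (Φ p) := by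
    rw [Filter.frequently_atTop]
    intro N; obtain ⟨n, hn1, hn2⟩ := hfreq N; exact ⟨n, hn1, hn2⟩
  obtain ⟨φ, hφmono, hφ⟩ := Filter.extraction_of_frequently_atTop (hfr.and_eventually hev)
  have hmem : ∀ k, Φ (q (φ k)) ∈ Metric.closedBall (0 : Euc d) R := by
    intro k
    simp only [Metric.mem_closedBall, dist_zero_right]
    exact hRb (q (φ k)) _ (hφ k).2 (hΦ (q (φ k)))
  obtain ⟨L, _, ψ, hψmono, hψ⟩ := tendsto_subseq_of_bounded
    (Metric.isBounded_closedBall (x := (0 : Euc d)) (r := R)) hmem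
  have hqψ : Tendsto (fun k => q (φ (ψ k))) atTop (𝓝 p) :=
    hq.comp ((hφmono.comp hψmono).tendsto_atTop)
  have hLmax : ∀ w, ⟪w, p⟫ - h w ≤ ⟪L, p⟫ - h L := by
    intro w
    have hle : ∀ k, ⟪w, q (φ (ψ k))⟫ - h w ≤ ⟪Φ (q (φ (ψ k))), q (φ (ψ k))⟫ - h (Φ (q (φ (ψ k)))) :=
      fun k => hΦ (q (φ (ψ k))) w
    have hψ' : Tendsto (fun k => Φ (q (φ (ψ k)))) atTop (𝓝 L) := hψ
    have t1 : Tendsto (fun k => ⟪w, q (φ (ψ k))⟫ - h w) atTop (𝓝 (⟪w, p⟫ - h w)) :=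
      (tendsto_const_nhds.inner hqψ).sub tendsto_const_nhds
    have t2b : Tendsto (fun k => h (Φ (q (φ (ψ k))))) atTop (𝓝 (h L)) := (hc.tendsto L).comp hψ'
    have t2 : Tendsto (fun k => ⟪Φ (q (φ (ψ k))), q (φ (ψ k))⟫ - h (Φ (q (φ (ψ k)))))
        atTop (𝓝 (⟪L, p⟫ - h L)) := (hψ'.inner hqψ).sub t2b
    exact le_of_tendsto_of_tendsto' t1 t2 hle
  have hLeq : L = Φ p := aux_max_unique h1 p L (Φ p) hLmax (hΦ p)
  have hψ2 : Tendsto (fun k => Φ (q (φ (ψ k)))) atTop (𝓝 L) := hψ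
  have hdist : Tendsto (fun k => dist (Φ (q (φ (ψ k)))) (Φ p)) atTop (𝓝 (dist L (Φ p))) :=
    hψ2.dist tendsto_const_nhds
  have hεle : ε ≤ dist L (Φ p) :=
    ge_of_tendsto hdist (Filter.Eventually.of_forall fun k => (hφ (ψ k)).1)
  rw [hLeq, dist_self] at hεle
  linarith

set_option maxHeartbeats 1000000 in
lemma aux_conj_eq {d : ℕ} {h : Euc d → ℝ} (Φ : Euc d → Euc d)
    (hΦ : ∀ p w, ⟪w, p⟫ - h w ≤ ⟪Φ p, p⟫ - h (Φ p)) (p : Euc d) :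
    convConj h p = ⟪Φ p, p⟫ - h (Φ p) := by
  refine le_antisymm (ciSup_le (hΦ p)) ?_
  exact le_ciSup ⟨⟪Φ p, p⟫ - h (Φ p), by rintro _ ⟨w, rfl⟩; exact hΦ p w⟩ (Φ p)

set_option maxHeartbeats 1000000 in
lemma aux_hasGradient {d : ℕ} {h : Euc d → ℝ} (h1 : StrictConvexOn ℝ Set.univ h)
    (h3 : H3 h) (Φ : Euc d → Euc d)
    (hΦ : ∀ p w, ⟪w, p⟫ - h w ≤ ⟪Φ p, p⟫ - h (Φ p)) (p : Euc d) :
    HasGradientAt (convConj h) (Φ p) p := by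
  rw [hasGradientAt_iff_isLittleO, Asymptotics.isLittleO_iff]
  intro c hc
  have hcont := aux_phi_cont h1 h3 Φ hΦ p
  have hev : ∀ᶠ q in 𝓝 p, Φ q ∈ Metric.closedBall (Φ p) c :=
    hcont.eventually (Metric.closedBall_mem_nhds (Φ p) hc)
  filter_upwards [hev] with q hq
  have hd : ‖Φ q - Φ p‖ ≤ c := by
    simpa [Metric.mem_closedBall, dist_eq_norm] using hq
  have e1 : convConj h q = ⟪Φ q, q⟫ - h (Φ q) := aux_conj_eq Φ hΦ q
  have e2 : convConj h p = ⟪Φ p, p⟫ - h (Φ p) := aux_conj_eq Φ hΦ p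
  have hlow : 0 ≤ convConj h q - convConj h p - ⟪Φ p, q - p⟫ := by
    have h1' : ⟪Φ p, q⟫ - h (Φ p) ≤ ⟪Φ q, q⟫ - h (Φ q) := hΦ q (Φ p)
    rw [e1, e2, inner_sub_right]
    linarith
  have hup : convConj h q - convConj h p - ⟪Φ p, q - p⟫ ≤ ⟪Φ q - Φ p, q - p⟫ := by
    have h2' : ⟪Φ q, p⟫ - h (Φ q) ≤ ⟪Φ p, p⟫ - h (Φ p) := hΦ p (Φ q)
    rw [e1, e2, inner_sub_left, inner_sub_right, inner_sub_right]
    linarith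
  have habs : ‖convConj h q - convConj h p - ⟪Φ p, q - p⟫‖ ≤ ‖Φ q - Φ p‖ * ‖q - p‖ := by
    rw [Real.norm_eq_abs, abs_le]
    constructor
    · have : (0:ℝ) ≤ ‖Φ q - Φ p‖ * ‖q - p‖ := mul_nonneg (norm_nonneg _) (norm_nonneg _)
      linarith
    · exact le_trans hup (real_inner_le_norm _ _)
  calc ‖convConj h q - convConj h p - ⟪Φ p, q - p⟫‖ ≤ ‖Φ q - Φ p‖ * ‖q - p‖ := habs
    _ ≤ c * ‖q - p‖ := by nlinarith [norm_nonneg (q - p), norm_nonneg (Φ q - Φ p)]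

lemma aux_card_filter_val_lt (n q : ℕ) (hq : q ≤ n) :
    (Finset.univ.filter fun i : Fin n => (i : ℕ) < q).card = q := by
  have he : (Finset.univ.filter fun i : Fin n => (i : ℕ) < q)
      = Finset.map (Fin.castLEEmb hq) Finset.univ := by
    ext i
    simp only [Finset.mem_filter, Finset.mem_univ, true_and, Finset.mem_map, Fin.castLEEmb]
    constructor
    · intro hi; exact ⟨⟨(i : ℕ), hi⟩, rfl⟩
    · rintro ⟨a, rfl⟩; exact a.2
  rw [he, Finset.card_map, Finset.card_univ, Fintype.card_fin]

lemma aux_pair_ineq {n : ℕ} {iℓ a : Fin n} (hne : iℓ ≠ a) (g1 g2 : Fin n → ℝ)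
    (hsum : ∑ i, g1 i ≤ ∑ i, g2 i)
    (heq : ∀ i, i ≠ iℓ → i ≠ a → g2 i = g1 i) : g1 iℓ + g1 a ≤ g2 iℓ + g2 a := by
  have hsplit : ∀ g : Fin n → ℝ,
      ∑ i, g i = (g iℓ + g a) + ∑ i ∈ ({iℓ, a} : Finset (Fin n))ᶜ, g i := by
    intro g
    rw [← Finset.sum_add_sum_compl ({iℓ, a} : Finset (Fin n)) g, Finset.sum_pair hne]
  rw [hsplit g1, hsplit g2] at hsum
  have hcc : ∑ i ∈ ({iℓ, a} : Finset (Fin n))ᶜ, g2 i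
      = ∑ i ∈ ({iℓ, a} : Finset (Fin n))ᶜ, g1 i := by
    refine Finset.sum_congr rfl fun i hi => ?_
    rw [Finset.mem_compl] at hi
    simp only [Finset.mem_insert, Finset.mem_singleton, not_or] at hi
    exact heq i hi.1 hi.2
  rw [hcc] at hsum
  linarith

set_option maxHeartbeats 2000000 in
/-- in the relabeled discrete setup with contaminating point
`z_k = u_j - ∇h*(z₀ + k v)` placed with multiplicity `m ≥ ℓ`, every choice of optimal
assignments `T_k` satisfies `‖T_k(u_j)‖ → ∞`. -/
theorem discrete_upper_part_ii (d n : ℕ) (hd : 1 ≤ d) (h : Euc d → ℝ)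
    (hpos : ∀ x, 0 ≤ h x) (h1 : H1 h) (h2 : H2 h) (h3 : H3 h)
    (u x : Fin n → Euc d) (hu : Function.Injective u) (hx : Function.Injective x)
    (σn : Equiv.Perm (Fin n)) (hσn : IsOptAssign h u x σn)
    (j : Fin n) (v : Euc d) (hv : ‖v‖ = 1)
    -- relabeling `u_(i) = u (ρ i)`
    (ρ : Equiv.Perm (Fin n)) (ℓ : ℕ) (hℓ1 : 1 ≤ ℓ) (hℓn : ℓ ≤ n)
    (hlab : ∀ i : Fin n, ⟪v, u (ρ i) - u j⟫ ≤ 0 ↔ (i : ℕ) < ℓ)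
    (iℓ : Fin n) (hiℓ : (iℓ : ℕ) + 1 = ℓ) (hρiℓ : ρ iℓ = j)
    (z₀ : Euc d) (m : ℕ) (hm1 : 1 ≤ m) (hmn : m ≤ n) (hℓm : ℓ ≤ m)
    -- contaminating points
    (z : ℕ → Euc d) (hz : ∀ k : ℕ, z k = u j - gradient (convConj h) (z₀ + (k : ℝ) • v))
    -- contaminated targets: `z k` with multiplicity `m`, together with `T(u_(i))` for `i > m`
    (y : ℕ → Fin n → Euc d)
    (hy : ∀ k : ℕ, ∀ i : Fin n, y k i = if (i : ℕ) < m then z k else x (σn (ρ i)))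
    -- any choice of optimal assignments for the contaminated targets
    (τ : ℕ → Equiv.Perm (Fin n))
    (hτ : ∀ k : ℕ, IsOptAssign h (fun i => u (ρ i)) (y k) (τ k)) :
    Tendsto (fun k : ℕ => ‖y k (τ k iℓ)‖) atTop atTop := by
  classical
  have hc : Continuous h := aux_cont h1
  have hex : ∀ p : Euc d, ∃ xx : Euc d, ∀ w, ⟪w, p⟫ - h w ≤ ⟪xx, p⟫ - h xx :=
    aux_exists_max hc h3
  set Φ : Euc d → Euc d := fun p => Classical.choose (hex p) with hΦdef
  have hΦ : ∀ p w, ⟪w, p⟫ - h w ≤ ⟪Φ p, p⟫ - h (Φ p) := fun p => Classical.choose_spec (hex p)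
  have hgrad : ∀ p, gradient (convConj h) p = Φ p := fun p =>
    (aux_hasGradient h1 h3 Φ hΦ p).gradient
  set P : ℕ → Euc d := fun k => z₀ + (k : ℝ) • v with hPdef
  have hzk : ∀ k, z k = u j - Φ (P k) := fun k => by rw [hz k, hgrad]
  have hvv : ⟪v, v⟫ = 1 := by rw [real_inner_self_eq_norm_mul_norm, hv, one_mul]
  -- Step 1: ‖Φ (P k)‖ → ∞
  have hΦtop : Tendsto (fun k : ℕ => ‖Φ (P k)‖) atTop atTop := by
    rw [tendsto_atTop]
    intro b
    set r : ℝ := max b 0 with hr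
    obtain ⟨B, hB⟩ := (isCompact_closedBall (0 : Euc d) (r + 1)).exists_bound_of_continuousOn
      hc.continuousOn
    have hev : ∀ᶠ k : ℕ in atTop, B - ⟪v, z₀⟫ < (k : ℝ) :=
      (tendsto_natCast_atTop_atTop (R := ℝ)).eventually_gt_atTop _
    filter_upwards [hev] with k hk
    by_contra hcon
    push_neg at hcon
    have hΦb : ‖Φ (P k)‖ ≤ r := le_trans (le_of_lt hcon) (le_max_left b 0)
    have hmem1 : Φ (P k) + v ∈ Metric.closedBall (0 : Euc d) (r + 1) := by
      simp only [Metric.mem_closedBall, dist_zero_right]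
      calc ‖Φ (P k) + v‖ ≤ ‖Φ (P k)‖ + ‖v‖ := norm_add_le _ _
        _ ≤ r + 1 := by rw [hv]; linarith
    have hkey := hΦ (P k) (Φ (P k) + v)
    rw [inner_add_left] at hkey
    have hvP : ⟪v, P k⟫ = ⟪v, z₀⟫ + (k : ℝ) := by
      simp only [hPdef, inner_add_right, real_inner_smul_right, hvv]
      ring
    have hb1 : h (Φ (P k) + v) ≤ B :=
      le_trans (le_abs_self _) (by simpa [Real.norm_eq_abs] using hB _ hmem1)
    have hb2 : 0 ≤ h (Φ (P k)) := hpos _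
    rw [hvP] at hkey
    linarith
  -- eventual separation bound
  have E : ∀ᶠ k : ℕ in atTop, ∀ a i' : Fin n, ℓ ≤ (a : ℕ) →
      h (u (ρ a) - x (σn (ρ i'))) < ⟪u (ρ a) - u j, P k⟫ := by
    rw [Filter.eventually_all]; intro a
    rw [Filter.eventually_all]; intro i'
    by_cases hla : ℓ ≤ (a : ℕ)
    · have hvpos : 0 < ⟪v, u (ρ a) - u j⟫ := by
        by_contra hle
        push_neg at hle
        have := (hlab a).1 hle
        omega
      have hTT : Tendsto (fun k : ℕ => ⟪u (ρ a) - u j, P k⟫) atTop atTop := by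
        have hexp : ∀ k : ℕ, ⟪u (ρ a) - u j, P k⟫
            = ⟪u (ρ a) - u j, z₀⟫ + (k : ℝ) * ⟪v, u (ρ a) - u j⟫ := by
          intro k
          simp only [hPdef, inner_add_right, real_inner_smul_right]
          rw [real_inner_comm (u (ρ a) - u j) v]
        rw [tendsto_congr hexp]
        exact tendsto_atTop_add_const_left _ _
          ((tendsto_natCast_atTop_atTop (R := ℝ)).atTop_mul_const hvpos)
      exact (hTT.eventually_gt_atTop _).mono fun k hk _ => hk
    · exact Filter.Eventually.of_forall fun k h' => absurd h' hla
  have hiℓlt : (iℓ : ℕ) < ℓ := by omega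
  -- main eventual claim
  have hfin : ∀ᶠ k : ℕ in atTop, ‖Φ (P k)‖ - ‖u j‖ ≤ ‖y k (τ k iℓ)‖ := by
    filter_upwards [E] with k hk
    have hcase : ((τ k) iℓ : ℕ) < m := by
      by_contra hcon
      push_neg at hcon
      obtain ⟨a, hla, hτa⟩ : ∃ a : Fin n, ℓ ≤ (a : ℕ) ∧ ((τ k) a : ℕ) < m := by
        by_contra hno
        push_neg at hno
        set F : Finset (Fin n) := Finset.univ.filter fun i : Fin n => ((τ k) i : ℕ) < m with hF
        set G : Finset (Fin n) := Finset.univ.filter fun i : Fin n => (i : ℕ) < ℓ with hG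
        have hcardF : F.card = m := by
          have himg : F = Finset.image (τ k).symm
              (Finset.univ.filter fun i : Fin n => (i : ℕ) < m) := by
            ext i
            simp only [hF, Finset.mem_filter, Finset.mem_univ, true_and, Finset.mem_image]
            constructor
            · intro hi; exact ⟨(τ k) i, hi, Equiv.symm_apply_apply _ _⟩
            · rintro ⟨b, hb, rfl⟩; simpa using hb
          rw [himg, Finset.card_image_of_injective _ (τ k).symm.injective,
            aux_card_filter_val_lt n m hmn]
        have hcardG : G.card = ℓ := aux_card_filter_val_lt n ℓ hℓn
        have hiℓG : iℓ ∈ G := Finset.mem_filter.2 ⟨Finset.mem_univ _, hiℓlt⟩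
        have hsub : F ⊆ G.erase iℓ := by
          intro i hi
          simp only [hF, Finset.mem_filter, Finset.mem_univ, true_and] at hi
          have hne : i ≠ iℓ := by
            intro he; rw [he] at hi; omega
          have hilt : (i : ℕ) < ℓ := by
            by_contra hge
            push_neg at hge
            exact absurd hi (not_lt.2 (hno i hge))
          exact Finset.mem_erase.2 ⟨hne, Finset.mem_filter.2 ⟨Finset.mem_univ _, hilt⟩⟩
        have hle := Finset.card_le_card hsub
        rw [hcardF, Finset.card_erase_of_mem hiℓG, hcardG] at hle
        omega
      have hne : iℓ ≠ a := by
        intro he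
        rw [he] at hiℓlt
        omega
      -- swap inequality
      have hsw := hτ k ((Equiv.swap iℓ a).trans (τ k))
      simp only [Equiv.trans_apply] at hsw
      have hpair := aux_pair_ineq hne
        (fun i => cost h (u (ρ i)) (y k ((τ k) i)))
        (fun i => cost h (u (ρ i)) (y k ((τ k) (Equiv.swap iℓ a i))))
        hsw
        (fun i h1' h2' => by simp only [Equiv.swap_apply_of_ne_of_ne h1' h2'])
      simp only [Equiv.swap_apply_left, Equiv.swap_apply_right] at hpair
      have hyz : y k ((τ k) a) = z k := by rw [hy k, if_pos hτa]
      have hyt : y k ((τ k) iℓ) = x (σn (ρ ((τ k) iℓ))) := by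
        rw [hy k, if_neg (not_lt.2 hcon)]
      rw [hyz, hyt, hρiℓ] at hpair
      simp only [cost] at hpair
      have huz : u j - z k = Φ (P k) := by rw [hzk k]; abel
      have haz : u (ρ a) - z k = Φ (P k) + (u (ρ a) - u j) := by rw [hzk k]; abel
      rw [huz, haz] at hpair
      have hkey := hΦ (P k) (Φ (P k) + (u (ρ a) - u j))
      rw [inner_add_left] at hkey
      have hbig := hk a ((τ k) iℓ) hla
      have hnn : 0 ≤ h (u j - x (σn (ρ ((τ k) iℓ)))) := hpos _
      linarith
    have hyval : y k ((τ k) iℓ) = u j - Φ (P k) := by rw [hy k, if_pos hcase, hzk k]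
    rw [hyval]
    calc ‖Φ (P k)‖ - ‖u j‖ ≤ ‖Φ (P k) - u j‖ := norm_sub_norm_le _ _
      _ = ‖u j - Φ (P k)‖ := norm_sub_rev _ _
  have htop : Tendsto (fun k : ℕ => ‖Φ (P k)‖ - ‖u j‖) atTop atTop := by
    simp only [sub_eq_add_neg]
    exact tendsto_atTop_add_const_right _ _ hΦtop
  exact tendsto_atTop_mono' atTop hfin htop


end
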